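/- Fix acyclic signatures σ and σ* of a connected finite graph G. For any two distinct spanning trees T₁ and T₂, there exists an edge e in the symmetric difference T₁ △ T₂ such that the orientations g_{σ,σ*}(T₁) and g_{σ,σ*}(T₂) assign opposite directions to e. In particular, the map g_{σ,σ*} from spanning trees to orientations is injective. -/

import Mathlib

open Function

namespace GB

structure Graph where
  V : Type
  E : Type
  [fV : Fintype V]
  [fE : Fintype E]
  [dV : DecidableEq V]
  [dE : DecidableEq E]
  tail : E → V
  head : E → V

attribute [instance] Graph.fV Graph.fE Graph.dV Graph.dE

variable (G : Graph)

/-- Incidence matrix with respect to the reference orientation. -/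
def incMat : Matrix G.V G.E ℝ := fun v e =>
  (if G.head e = v then 1 else 0) - (if G.tail e = v then 1 else 0)

/-- The incidence linear map. -/
noncomputable def DMap : (G.E → ℝ) →ₗ[ℝ] (G.V → ℝ) := (incMat G).mulVecLin

/-- Cycle space: kernel of the incidence matrix (equal to ker of D with a row removed). -/
noncomputable def cycleSpace : Submodule ℝ (G.E → ℝ) := LinearMap.ker (DMap G)

/-- Cocycle space: row space of the incidence matrix (= im(D^T) for connected G). -/
noncomputable def cocycleSpace : Submodule ℝ (G.E → ℝ) :=
  LinearMap.range ((incMat G).transpose.mulVecLin)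

def Connected : Prop :=
  ∀ f : G.V → ℝ, (∀ e, f (G.head e) = f (G.tail e)) → ∀ v w, f v = f w

/-- a {0,±1}-vector -/
def IsZPM (x : G.E → ℝ) : Prop := ∀ e, x e = 0 ∨ x e = 1 ∨ x e = -1

/-- A directed cycle, identified with a support-minimal nonzero {0,±1}-vector of the
cycle space (a signed circuit of the graphic matroid). -/
def IsDirCycle (x : G.E → ℝ) : Prop :=
  x ∈ cycleSpace G ∧ x ≠ 0 ∧ IsZPM G x ∧
    ∀ y ∈ cycleSpace G, y ≠ 0 → support y ⊆ support x → support y = support x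

/-- A directed cocycle (signed cocircuit). -/
def IsDirCocycle (x : G.E → ℝ) : Prop :=
  x ∈ cocycleSpace G ∧ x ≠ 0 ∧ IsZPM G x ∧
    ∀ y ∈ cocycleSpace G, y ≠ 0 → support y ⊆ support x → support y = support x

def IsCycle (C : Set G.E) : Prop := ∃ x, IsDirCycle G x ∧ support x = C
def IsCocycle (C : Set G.E) : Prop := ∃ x, IsDirCocycle G x ∧ support x = C

/-- Orientations are identified with {0,1}-vectors, (1,…,1) being the reference orientation. -/
def IsOrientation (O : G.E → ℝ) : Prop := ∀ e, O e = 0 ∨ O e = 1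

/-- the ±1 direction of edge e in orientation O -/
def dir (O : G.E → ℝ) (e : G.E) : ℝ := 2 * O e - 1

/-- the signed vector x (e.g. a directed cycle or partial orientation) is contained in O -/
def InOrient (x O : G.E → ℝ) : Prop := ∀ e, x e = 0 ∨ x e = dir G O e

def IsIntVec (x : G.E → ℝ) : Prop := ∀ e, ∃ n : ℤ, x e = (n : ℝ)

/-- x is a sum of pairwise edge-disjoint directed cycles -/
def SumDisjDirCycles (x : G.E → ℝ) : Prop :=
  ∃ (n : ℕ) (c : Fin n → (G.E → ℝ)), (∀ i, IsDirCycle G (c i)) ∧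
    (∀ i j, i ≠ j → Disjoint (support (c i)) (support (c j))) ∧ x = ∑ i, c i

/-- x is a sum of pairwise edge-disjoint directed cocycles -/
def SumDisjDirCocycles (x : G.E → ℝ) : Prop :=
  ∃ (n : ℕ) (c : Fin n → (G.E → ℝ)), (∀ i, IsDirCocycle G (c i)) ∧
    (∀ i j, i ≠ j → Disjoint (support (c i)) (support (c j))) ∧ x = ∑ i, c i

/-- A cycle signature: a choice of direction for each cycle. -/
structure CycSig (G : Graph) where
  s : Set G.E → (G.E → ℝ)
  mem : ∀ C, IsCycle G C → IsDirCycle G (s C) ∧ support (s C) = C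

/-- A cocycle signature. -/
structure CocycSig (G : Graph) where
  s : Set G.E → (G.E → ℝ)
  mem : ∀ C, IsCocycle G C → IsDirCocycle G (s C) ∧ support (s C) = C

open Classical in
/-- σ is acyclic: no nontrivial nonnegative combination of the σ(C) vanishes. -/
noncomputable def AcyclicSig (σ : CycSig G) : Prop :=
  ∀ a : Set G.E → ℝ, (∀ C, 0 ≤ a C) →
    ∑ C ∈ Finset.univ.filter (fun C => IsCycle G C), a C • σ.s C = 0 →
    ∀ C, IsCycle G C → a C = 0

open Classical in
noncomputable def AcyclicCosig (σ : CocycSig G) : Prop :=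
  ∀ a : Set G.E → ℝ, (∀ C, 0 ≤ a C) →
    ∑ C ∈ Finset.univ.filter (fun C => IsCocycle G C), a C • σ.s C = 0 →
    ∀ C, IsCocycle G C → a C = 0

/-- O is σ-compatible: every directed cycle in O is the chosen one. -/
def SigCompatible (σ : CycSig G) (O : G.E → ℝ) : Prop :=
  ∀ x, IsDirCycle G x → InOrient G x O → x = σ.s (support x)

def CosigCompatible (σ : CocycSig G) (O : G.E → ℝ) : Prop :=
  ∀ x, IsDirCocycle G x → InOrient G x O → x = σ.s (support x)

def Compatible (σc : CycSig G) (σs : CocycSig G) (O : G.E → ℝ) : Prop :=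
  SigCompatible G σc O ∧ CosigCompatible G σs O

/-- one step of cycle reversal -/
def CycRev (O O' : G.E → ℝ) : Prop :=
  ∃ x, IsDirCycle G x ∧ InOrient G x O ∧ O' = O - x

/-- cycle reversal equivalence -/
def SameCycClass : (G.E → ℝ) → (G.E → ℝ) → Prop := Relation.EqvGen (CycRev G)

/-- one step of cycle or cocycle reversal -/
def CCRev (O O' : G.E → ℝ) : Prop :=
  ∃ x, (IsDirCycle G x ∨ IsDirCocycle G x) ∧ InOrient G x O ∧ O' = O - x

/-- cycle-cocycle reversal equivalence -/
def SameCCClass : (G.E → ℝ) → (G.E → ℝ) → Prop := Relation.EqvGen (CCRev G)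

/-- x is the directed fundamental cycle of e ∉ T, directed along the reference arc of e -/
def FundCycle (T : Finset G.E) (e : G.E) (x : G.E → ℝ) : Prop :=
  IsDirCycle G x ∧ x e = 1 ∧ support x ⊆ insert e (↑T : Set G.E)

/-- x is the directed fundamental cocycle of e ∈ T -/
def FundCocycle (T : Finset G.E) (e : G.E) (x : G.E → ℝ) : Prop :=
  IsDirCocycle G x ∧ x e = 1 ∧ support x ⊆ insert e ((↑T : Set G.E)ᶜ)

/-- T is a spanning tree: it contains no cycle and its complement contains no cocycle. -/
def IsSpanningTree (T : Finset G.E) : Prop :=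
  (∀ x, IsDirCycle G x → ¬ support x ⊆ (↑T : Set G.E)) ∧
  (∀ x, IsDirCocycle G x → ¬ support x ⊆ ((↑T : Set G.E)ᶜ))

/-- O = g_{σ,σ*}(T): each e ∉ T is oriented along σ(C(T,e)), each e ∈ T along σ*(C*(T,e)). -/
def GOrient (σc : CycSig G) (σs : CocycSig G) (T : Finset G.E) (O : G.E → ℝ) : Prop :=
  IsOrientation G O ∧
  (∀ e ∉ T, ∀ x, FundCycle G T e x → dir G O e = σc.s (support x) e) ∧
  (∀ e ∈ T, ∀ x, FundCocycle G T e x → dir G O e = σs.s (support x) e)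

/-- φ_{σ,σ*}(O) = S : O is obtained from the compatible orientation O^cp = g(T) by reversing
disjoint directed cycles c i and cocycles d j, and S = T ∪ (⊎ C_i) \ (⊎ C*_j). -/
def PhiRel (σc : CycSig G) (σs : CocycSig G) (O : G.E → ℝ) (S : Set G.E) : Prop :=
  ∃ (T : Finset G.E) (Ocp : G.E → ℝ) (n m : ℕ)
    (c : Fin n → (G.E → ℝ)) (d : Fin m → (G.E → ℝ)),
    IsSpanningTree G T ∧ Compatible G σc σs Ocp ∧ GOrient G σc σs T Ocp ∧
    (∀ i, IsDirCycle G (c i) ∧ InOrient G (c i) Ocp) ∧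
    (∀ j, IsDirCocycle G (d j) ∧ InOrient G (d j) Ocp) ∧
    (∀ i j, i ≠ j → Disjoint (support (c i)) (support (c j))) ∧
    (∀ i j, i ≠ j → Disjoint (support (d i)) (support (d j))) ∧
    (∀ i j, Disjoint (support (c i)) (support (d j))) ∧
    O = Ocp - (∑ i, c i) - (∑ j, d j) ∧
    S = ((↑T : Set G.E) ∪ (⋃ i, support (c i))) \ (⋃ j, support (d j))


/-- the cube of continuous orientations -/
def cube : Set (G.E → ℝ) := {x | ∀ e, 0 ≤ x e ∧ x e ≤ 1}

/-- x is a σ-compatible continuous orientation -/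
def ContSigCompat (σ : CycSig G) (x : G.E → ℝ) : Prop :=
  x ∈ cube G ∧ ∀ ε : ℝ, 0 < ε → ∀ C, IsCycle G C → x + ε • σ.s C ∉ cube G

/-- S̃_σ = S_σ + (im(D^T) ∩ ℤ^E) -/
def Stilde (σ : CycSig G) : Set (G.E → ℝ) :=
  {x | ∃ s, ContSigCompat G σ s ∧ ∃ v, v ∈ cocycleSpace G ∧ IsIntVec G v ∧ x = s + v}

section AuxStmt9

open Finset Matrix

variable (G : Graph)

/-- plain dot product on the edge space -/
noncomputable def dotE (x y : G.E → ℝ) : ℝ := ∑ g, x g * y g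

lemma mem_cycleSpace_iff (x : G.E → ℝ) :
    x ∈ cycleSpace G ↔ ∀ v, ∑ e, incMat G v e * x e = 0 := by
  constructor
  · intro h v
    have h2 : DMap G x = 0 := LinearMap.mem_ker.mp h
    have := congrFun h2 v
    simpa [DMap, Matrix.mulVecLin_apply, Matrix.mulVec, dotProduct] using this
  · intro h
    refine LinearMap.mem_ker.mpr ?_
    funext v
    simpa [DMap, Matrix.mulVecLin_apply, Matrix.mulVec, dotProduct] using h v

lemma transMulVec (u : G.V → ℝ) (e : G.E) :
    (incMat G).transpose.mulVecLin u e = u (G.head e) - u (G.tail e) := by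
  simp [Matrix.mulVecLin_apply, Matrix.mulVec, Matrix.vecMul, dotProduct, incMat,
    Matrix.transpose_apply, sub_mul, mul_sub, Finset.sum_sub_distrib, ite_mul, mul_ite,
    one_mul, zero_mul, mul_one, mul_zero]

lemma mem_cocycleSpace_iff (y : G.E → ℝ) :
    y ∈ cocycleSpace G ↔ ∃ u : G.V → ℝ, y = fun e => u (G.head e) - u (G.tail e) := by
  constructor
  · rintro ⟨u, rfl⟩
    exact ⟨u, by funext e; rw [transMulVec]⟩
  · rintro ⟨u, rfl⟩
    exact ⟨u, by funext e; rw [transMulVec]⟩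

lemma dotE_cyc_cocyc {x y : G.E → ℝ} (hx : x ∈ cycleSpace G) (hy : y ∈ cocycleSpace G) :
    dotE G x y = 0 := by
  obtain ⟨u, rfl⟩ := hy
  have hx' := (mem_cycleSpace_iff G x).mp hx
  have h1 : dotE G x ((incMat G).transpose.mulVecLin u) =
      ∑ g, ∑ v, u v * (incMat G v g * x g) := by
    unfold dotE
    refine Finset.sum_congr rfl fun g _ => ?_
    rw [Matrix.mulVecLin_apply]
    simp only [Matrix.mulVec, dotProduct, Matrix.transpose_apply, Finset.mul_sum,
      Finset.sum_mul]
    exact Finset.sum_congr rfl fun v _ => by ring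
  rw [h1, Finset.sum_comm]
  calc (∑ v, ∑ g, u v * (incMat G v g * x g)) = ∑ v, u v * ∑ g, incMat G v g * x g := by
        exact Finset.sum_congr rfl fun v _ => by rw [Finset.mul_sum]
    _ = 0 := by simp [hx']

lemma IsDirCycle.neg' {x : G.E → ℝ} (h : IsDirCycle G x) : IsDirCycle G (-x) := by
  obtain ⟨h1, h2, h3, h4⟩ := h
  refine ⟨neg_mem h1, neg_ne_zero.mpr h2, fun e => ?_, fun y hy hy0 hs => ?_⟩
  · rcases h3 e with h | h | h <;> simp [h]
  · rw [Function.support_neg] at hs ⊢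
    exact h4 y hy hy0 hs

lemma IsDirCocycle.neg' {x : G.E → ℝ} (h : IsDirCocycle G x) : IsDirCocycle G (-x) := by
  obtain ⟨h1, h2, h3, h4⟩ := h
  refine ⟨neg_mem h1, neg_ne_zero.mpr h2, fun e => ?_, fun y hy hy0 hs => ?_⟩
  · rcases h3 e with h | h | h <;> simp [h]
  · rw [Function.support_neg] at hs ⊢
    exact h4 y hy hy0 hs

/-- generic support-minimization -/
lemma exists_min_zpm (W : Submodule ℝ (G.E → ℝ))
    (hzpm : ∀ y ∈ W, y ≠ 0 → ∃ c, c ∈ W ∧ c ≠ 0 ∧ IsZPM G c ∧ support c ⊆ support y)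
    {x : G.E → ℝ} (hx : x ∈ W) (hx0 : x ≠ 0) :
    ∃ c, c ∈ W ∧ c ≠ 0 ∧ IsZPM G c ∧ support c ⊆ support x ∧
      ∀ y ∈ W, y ≠ 0 → support y ⊆ support c → support y = support c := by
  classical
  set scard : (G.E → ℝ) → ℕ := fun y => (Set.toFinite (support y)).toFinset.card with hscard
  have hP : ∃ n, ∃ y, (y ∈ W ∧ y ≠ 0 ∧ support y ⊆ support x) ∧ scard y = n :=
    ⟨scard x, x, ⟨hx, hx0, subset_rfl⟩, rfl⟩
  obtain ⟨y₀, ⟨hy₀W, hy₀0, hy₀x⟩, hy₀c⟩ := Nat.find_spec hP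
  obtain ⟨c, hcW, hc0, hczpm, hcy⟩ := hzpm y₀ hy₀W hy₀0
  have hcx : support c ⊆ support x := hcy.trans hy₀x
  refine ⟨c, hcW, hc0, hczpm, hcx, fun y hyW hy0 hyc => ?_⟩
  have h1 : scard c ≤ Nat.find hP := by
    rw [← hy₀c]
    exact Finset.card_le_card (Set.Finite.toFinset_mono hcy)
  have h2 : Nat.find hP ≤ scard y := Nat.find_min' hP ⟨y, ⟨hyW, hy0, hyc.trans hcx⟩, rfl⟩
  have h3 : (Set.toFinite (support y)).toFinset = (Set.toFinite (support c)).toFinset :=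
    Finset.eq_of_subset_of_card_le (Set.Finite.toFinset_mono hyc) (h1.trans h2)
  rw [← (Set.toFinite (support y)).coe_toFinset, ← (Set.toFinite (support c)).coe_toFinset, h3]

lemma exists_zpm_in_cycleSpace {x : G.E → ℝ} (hx : x ∈ cycleSpace G) (h0 : x ≠ 0) :
    ∃ c, c ∈ cycleSpace G ∧ c ≠ 0 ∧ IsZPM G c ∧ support c ⊆ support x := by
  classical
  by_cases hloop : ∃ e, x e ≠ 0 ∧ G.head e = G.tail e
  · obtain ⟨e₀, he₀, hl⟩ := hloop
    refine ⟨fun e => if e = e₀ then 1 else 0, ?_, ?_, fun e => ?_, fun e he => ?_⟩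
    · rw [mem_cycleSpace_iff]
      intro v
      rw [Finset.sum_eq_single e₀]
      · simp only [incMat, if_pos rfl, mul_one, hl, sub_self, zero_mul]
      · intro b _ hb
        rw [if_neg hb, mul_zero]
      · intro h; exact absurd (Finset.mem_univ e₀) h
    · intro h
      have := congrFun h e₀
      simp at this
    · by_cases h : e = e₀ <;> simp [h]
    · simp only [Function.mem_support] at he ⊢
      by_cases h : e = e₀
      · subst h; exact he₀
      · simp [h] at he
  push_neg at hloop
  have hex : ∃ e, x e ≠ 0 := by
    by_contra h
    push_neg at h
    exact h0 (funext fun e => h e)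
  obtain ⟨e₀, he₀⟩ := hex
  set hd : G.E → G.V := fun e => if 0 < x e then G.head e else G.tail e with hhd
  set tl : G.E → G.V := fun e => if 0 < x e then G.tail e else G.head e with htl
  have consterm : ∀ v, ∀ e ∈ Finset.univ, |x e| *
      ((if hd e = v then (1:ℝ) else 0) - (if tl e = v then 1 else 0)) =
      incMat G v e * x e := by
    intro v e _
    rcases lt_trichotomy (x e) 0 with h | h | h
    · have h1 : ¬ (0 < x e) := by linarith
      simp only [hhd, htl, if_neg h1, abs_of_neg h, incMat]
      ring
    · simp [h, incMat]
    · simp only [hhd, htl, if_pos h, abs_of_pos h, incMat]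
      ring
  have cons : ∀ v, ∑ e, |x e| *
      ((if hd e = v then (1:ℝ) else 0) - (if tl e = v then 1 else 0)) = 0 := by
    intro v
    rw [Finset.sum_congr rfl (consterm v)]
    exact (mem_cycleSpace_iff G x).mp hx v
  have step : ∀ v, (∃ e, x e ≠ 0 ∧ hd e = v) → ∃ e, x e ≠ 0 ∧ tl e = v := by
    intro v hv
    obtain ⟨e₁, he₁, hhd1⟩ := hv
    by_contra hno
    push_neg at hno
    have hterm : ∀ e, 0 ≤ |x e| *
        ((if hd e = v then (1:ℝ) else 0) - (if tl e = v then 1 else 0)) := by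
      intro e
      by_cases hxe : x e = 0
      · simp [hxe]
      · rw [if_neg (hno e hxe), sub_zero]
        by_cases h : hd e = v
        · rw [if_pos h, mul_one]; exact abs_nonneg _
        · simp [h]
    have hpos : 0 < ∑ e, |x e| *
        ((if hd e = v then (1:ℝ) else 0) - (if tl e = v then 1 else 0)) := by
      refine Finset.sum_pos' (fun e _ => hterm e) ⟨e₁, Finset.mem_univ e₁, ?_⟩
      rw [if_pos hhd1, if_neg (hno e₁ he₁), sub_zero, mul_one]
      exact abs_pos.mpr he₁
    rw [cons v] at hpos
    exact lt_irrefl 0 hpos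
  have hS0 : ∃ e, x e ≠ 0 ∧ tl e = tl e₀ := ⟨e₀, he₀, rfl⟩
  set S := {v : G.V // ∃ e, x e ≠ 0 ∧ tl e = v} with hSdef
  set pick : S → G.E := fun s => Classical.choose s.2 with hpick
  have hpickspec : ∀ s : S, x (pick s) ≠ 0 ∧ tl (pick s) = s.1 :=
    fun s => Classical.choose_spec s.2
  set nxt : S → S := fun s => ⟨hd (pick s), step (hd (pick s)) ⟨pick s, (hpickspec s).1, rfl⟩⟩
    with hnxt
  set seq : ℕ → S := fun n => nxt^[n] ⟨tl e₀, hS0⟩ with hseq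
  have hseqsucc : ∀ n, seq (n + 1) = nxt (seq n) := by
    intro n
    rw [hseq]
    exact Function.iterate_succ_apply' nxt n _
  obtain ⟨m, n, hmn, hseqeq⟩ := Finite.exists_ne_map_eq_of_infinite seq
  have hPd : ∃ dd, 0 < dd ∧ ∃ i, seq i = seq (i + dd) := by
    rcases Nat.lt_or_ge m n with h | h
    · exact ⟨n - m, by omega, m, by rw [hseqeq]; congr 1; omega⟩
    · have h' : n < m := by omega
      exact ⟨m - n, by omega, n, by rw [← hseqeq]; congr 1; omega⟩
  obtain ⟨hd0, i₀, hcyc⟩ := Nat.find_spec hPd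
  set d := Nat.find hPd with hdd
  have hinj : ∀ a b, i₀ ≤ a → a < b → b < i₀ + d → seq a ≠ seq b := by
    intro a b ha hab hb hAB
    have hw : 0 < b - a ∧ ∃ i, seq i = seq (i + (b - a)) :=
      ⟨by omega, a, by rw [hAB]; congr 1; omega⟩
    exact Nat.find_min hPd (show b - a < d by omega) hw
  set sg : ℕ → ℝ := fun n => if 0 < x (pick (seq n)) then 1 else -1 with hsg
  set c : G.E → ℝ :=
    fun e => ∑ n ∈ Finset.Ico i₀ (i₀ + d), if e = pick (seq n) then sg n else 0 with hcdef
  have hedistinct : ∀ a ∈ Finset.Ico i₀ (i₀+d), ∀ b ∈ Finset.Ico i₀ (i₀+d), a ≠ b →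
      pick (seq a) ≠ pick (seq b) := by
    intro a ha b hb hab hpe
    rw [Finset.mem_Ico] at ha hb
    have h1 : (seq a).1 = (seq b).1 := by
      rw [← (hpickspec (seq a)).2, ← (hpickspec (seq b)).2, hpe]
    have h2 : seq a ≠ seq b := by
      rcases Nat.lt_or_ge a b with h | h
      · exact hinj a b ha.1 h hb.2
      · exact fun hq => hinj b a hb.1 (by omega) ha.2 hq.symm
    exact h2 (Subtype.ext h1)
  have hcval : ∀ m ∈ Finset.Ico i₀ (i₀ + d), c (pick (seq m)) = sg m := by
    intro m hm
    show (∑ n ∈ Finset.Ico i₀ (i₀ + d), if pick (seq m) = pick (seq n) then sg n else 0) = sg m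
    rw [Finset.sum_eq_single m]
    · rw [if_pos rfl]
    · intro b hb hbm
      exact if_neg (fun h => hedistinct m hm b hb (Ne.symm hbm) h)
    · intro hm'; exact absurd hm hm'
  have hsgpm : ∀ n, sg n = 1 ∨ sg n = -1 := by
    intro n; rw [hsg]; by_cases h : 0 < x (pick (seq n)) <;> simp [h]
  have hczpm : IsZPM G c := by
    intro e
    by_cases h : ∃ m ∈ Finset.Ico i₀ (i₀ + d), e = pick (seq m)
    · obtain ⟨m, hm, rfl⟩ := h
      rcases hsgpm m with h | h
      · right; left; rw [hcval m hm, h]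
      · right; right; rw [hcval m hm, h]
    · left
      push_neg at h
      rw [hcdef]
      exact Finset.sum_eq_zero fun n hn => if_neg (h n hn)
  have hcsupp : support c ⊆ support x := by
    intro e he
    simp only [Function.mem_support] at he ⊢
    by_cases h : ∃ m ∈ Finset.Ico i₀ (i₀ + d), e = pick (seq m)
    · obtain ⟨m, hm, rfl⟩ := h
      exact (hpickspec (seq m)).1
    · exfalso
      apply he
      push_neg at h
      rw [hcdef]
      exact Finset.sum_eq_zero fun n hn => if_neg (h n hn)
  have hc0 : c ≠ 0 := by
    intro h
    have hi₀ : i₀ ∈ Finset.Ico i₀ (i₀ + d) := Finset.mem_Ico.mpr ⟨le_refl _, by omega⟩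
    have h2 := hcval i₀ hi₀
    rw [h] at h2
    rcases hsgpm i₀ with hh | hh <;> rw [hh] at h2 <;> simp at h2
  have hcmem : c ∈ cycleSpace G := by
    rw [mem_cycleSpace_iff]
    intro v
    set F : ℕ → ℝ := fun n => if (seq n).1 = v then 1 else 0 with hF
    have hswap : ∑ e, incMat G v e * c e =
        ∑ n ∈ Finset.Ico i₀ (i₀ + d), incMat G v (pick (seq n)) * sg n := by
      rw [hcdef]
      calc ∑ e, incMat G v e * ∑ n ∈ Finset.Ico i₀ (i₀+d), (if e = pick (seq n) then sg n else 0)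
          = ∑ e, ∑ n ∈ Finset.Ico i₀ (i₀+d),
              (if e = pick (seq n) then incMat G v e * sg n else 0) := by
            refine Finset.sum_congr rfl fun e _ => ?_
            rw [Finset.mul_sum]
            refine Finset.sum_congr rfl fun n _ => ?_
            by_cases h : e = pick (seq n) <;> simp [h]
        _ = ∑ n ∈ Finset.Ico i₀ (i₀+d), ∑ e,
              (if e = pick (seq n) then incMat G v e * sg n else 0) := Finset.sum_comm
        _ = ∑ n ∈ Finset.Ico i₀ (i₀+d), incMat G v (pick (seq n)) * sg n := by
            refine Finset.sum_congr rfl fun n _ => ?_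
            simp
    have hterm : ∀ n, incMat G v (pick (seq n)) * sg n = F (n+1) - F n := by
      intro n
      have h1 : tl (pick (seq n)) = (seq n).1 := (hpickspec (seq n)).2
      have h2 : hd (pick (seq n)) = (seq (n+1)).1 := by
        rw [hseqsucc n]
      rw [hF]
      simp only
      rw [← h2, ← h1]
      by_cases h : 0 < x (pick (seq n))
      · rw [hsg]
        simp only [if_pos h]
        simp only [hhd, htl, if_pos h, incMat]
        ring
      · rw [hsg]
        simp only [if_neg h]
        simp only [hhd, htl, if_neg h, incMat]
        ring
    rw [hswap]
    calc ∑ n ∈ Finset.Ico i₀ (i₀+d), incMat G v (pick (seq n)) * sg n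
        = ∑ n ∈ Finset.Ico i₀ (i₀+d), (F (n+1) - F n) :=
          Finset.sum_congr rfl fun n _ => hterm n
      _ = ∑ k ∈ Finset.range (i₀ + d - i₀), (F (i₀ + k + 1) - F (i₀ + k)) :=
          Finset.sum_Ico_eq_sum_range (fun n => F (n + 1) - F n) i₀ (i₀ + d)
      _ = F (i₀ + d) - F i₀ := by
          rw [show i₀ + d - i₀ = d by omega]
          exact Finset.sum_range_sub (fun k => F (i₀ + k)) d
      _ = 0 := by rw [hF]; simp only [← hcyc]; ring
  exact ⟨c, hcmem, hc0, hczpm, hcsupp⟩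

lemma exists_zpm_in_cocycleSpace {y : G.E → ℝ} (hy : y ∈ cocycleSpace G) (h0 : y ≠ 0) :
    ∃ c, c ∈ cocycleSpace G ∧ c ≠ 0 ∧ IsZPM G c ∧ support c ⊆ support y := by
  classical
  obtain ⟨u, rfl⟩ := (mem_cocycleSpace_iff G y).mp hy
  have h0' : ∃ e, u (G.head e) - u (G.tail e) ≠ 0 := by
    by_contra h
    push_neg at h
    exact h0 (funext fun e => h e)
  obtain ⟨e₀, he₀⟩ := h0'
  set t : ℝ := (u (G.head e₀) + u (G.tail e₀)) / 2 with ht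
  set c : G.E → ℝ :=
    fun e => (if t < u (G.head e) then (1:ℝ) else 0) - (if t < u (G.tail e) then 1 else 0)
    with hc
  have hcmem : c ∈ cocycleSpace G :=
    (mem_cocycleSpace_iff G c).mpr ⟨fun v => if t < u v then 1 else 0, rfl⟩
  have hce₀ : c e₀ ≠ 0 := by
    rcases lt_or_gt_of_ne (sub_ne_zero.mp he₀) with h | h
    · have h1 : ¬ t < u (G.head e₀) := by rw [ht]; push_neg; linarith
      have h2 : t < u (G.tail e₀) := by rw [ht]; linarith
      simp [hc, h1, h2]
    · have h1 : t < u (G.head e₀) := by rw [ht]; linarith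
      have h2 : ¬ t < u (G.tail e₀) := by rw [ht]; push_neg; linarith
      simp [hc, h1, h2]
  refine ⟨c, hcmem, ?_, ?_, ?_⟩
  · intro hcz
    exact hce₀ (by rw [hcz]; rfl)
  · intro e
    by_cases h1 : t < u (G.head e) <;> by_cases h2 : t < u (G.tail e) <;> simp [hc, h1, h2]
  · intro e he
    simp only [Function.mem_support] at he ⊢
    intro hye
    apply he
    have : u (G.head e) = u (G.tail e) := by
      have := sub_eq_zero.mp hye
      linarith
    simp [hc, this]

lemma exists_dirCycle_subset {x : G.E → ℝ} (hx : x ∈ cycleSpace G) (h0 : x ≠ 0) :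
    ∃ c, IsDirCycle G c ∧ support c ⊆ support x := by
  obtain ⟨c, h1, h2, h3, h4, h5⟩ := exists_min_zpm G (cycleSpace G)
    (fun y hy hy0 => exists_zpm_in_cycleSpace G hy hy0) hx h0
  exact ⟨c, ⟨h1, h2, h3, h5⟩, h4⟩

lemma exists_dirCocycle_subset {x : G.E → ℝ} (hx : x ∈ cocycleSpace G) (h0 : x ≠ 0) :
    ∃ c, IsDirCocycle G c ∧ support c ⊆ support x := by
  obtain ⟨c, h1, h2, h3, h4, h5⟩ := exists_min_zpm G (cocycleSpace G)
    (fun y hy hy0 => exists_zpm_in_cocycleSpace G hy hy0) hx h0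
  exact ⟨c, ⟨h1, h2, h3, h5⟩, h4⟩

variable {G}

lemma no_cyc_in_tree {T : Finset G.E} (hT : IsSpanningTree G T) {x : G.E → ℝ}
    (hx : x ∈ cycleSpace G) (hs : support x ⊆ (↑T : Set G.E)) : x = 0 := by
  by_contra h0
  obtain ⟨c, hc, hcs⟩ := exists_dirCycle_subset G hx h0
  exact hT.1 c hc (hcs.trans hs)

lemma no_cocyc_out_tree {T : Finset G.E} (hT : IsSpanningTree G T) {y : G.E → ℝ}
    (hy : y ∈ cocycleSpace G) (hs : support y ⊆ ((↑T : Set G.E)ᶜ)) : y = 0 := by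
  by_contra h0
  obtain ⟨c, hc, hcs⟩ := exists_dirCocycle_subset G hy h0
  exact hT.2 c hc (hcs.trans hs)

/-- extension by zero of coordinates on T -/
noncomputable def extT {G : Graph} (T : Finset G.E) : ((↥T) → ℝ) →ₗ[ℝ] (G.E → ℝ) where
  toFun c := fun e => if h : e ∈ T then c ⟨e, h⟩ else 0
  map_add' a b := by
    classical
    funext e
    by_cases h : e ∈ T <;> simp [h]
  map_smul' r a := by
    classical
    funext e
    by_cases h : e ∈ T <;> simp [h]

/-- restriction of a subspace to coordinates in T -/
noncomputable def resT {G : Graph} (T : Finset G.E) (W : Submodule ℝ (G.E → ℝ)) :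
    W →ₗ[ℝ] (↥T → ℝ) :=
  LinearMap.pi fun t => (LinearMap.proj (t : G.E)).comp W.subtype

lemma resT_injective {T : Finset G.E} (hT : IsSpanningTree G T) :
    Function.Injective (resT T (cocycleSpace G)) := by
  rw [← LinearMap.ker_eq_bot, Submodule.eq_bot_iff]
  rintro ⟨y, hy⟩ h
  have h' : ∀ t : ↥T, y t = 0 := fun t => congrFun (LinearMap.mem_ker.mp h) t
  have hsupp : support y ⊆ ((↑T : Set G.E)ᶜ) := by
    intro g hg
    simp only [Set.mem_compl_iff, Finset.mem_coe]
    intro hgT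
    exact (Function.mem_support.mp hg) (h' ⟨g, hgT⟩)
  exact Subtype.ext (no_cocyc_out_tree hT hy hsupp)

lemma resTc_injective {T : Finset G.E} (hT : IsSpanningTree G T) :
    Function.Injective (resT (Finset.univ \ T) (cycleSpace G)) := by
  rw [← LinearMap.ker_eq_bot, Submodule.eq_bot_iff]
  rintro ⟨x, hx⟩ h
  have h' : ∀ t : ↥(Finset.univ \ T), x t = 0 := fun t => congrFun (LinearMap.mem_ker.mp h) t
  have hsupp : support x ⊆ (↑T : Set G.E) := by
    intro g hg
    by_contra hgT
    exact (Function.mem_support.mp hg)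
      (h' ⟨g, Finset.mem_sdiff.mpr ⟨Finset.mem_univ g, fun hh => hgT hh⟩⟩)
  exact Subtype.ext (no_cyc_in_tree hT hx hsupp)

lemma finrank_cocycleSpace_eq_rank {G : Graph} :
    Module.finrank ℝ ↥(cocycleSpace G) = Module.finrank ℝ ↥(LinearMap.range (DMap G)) := by
  have h := Matrix.rank_transpose (incMat G)
  exact h

lemma card_tree {T : Finset G.E} (hT : IsSpanningTree G T) :
    T.card = Module.finrank ℝ ↥(cocycleSpace G) := by
  classical
  have hfrT : Module.finrank ℝ ((↥T) → ℝ) = T.card := by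
    rw [Module.finrank_pi]
    exact Fintype.card_coe T
  have h1 : Module.finrank ℝ ↥(cocycleSpace G) ≤ T.card := by
    have := LinearMap.finrank_le_finrank_of_injective (resT_injective hT)
    rwa [hfrT] at this
  have hφ : Function.Injective ((DMap G).comp (extT T)) := by
    rw [← LinearMap.ker_eq_bot, Submodule.eq_bot_iff]
    intro a ha
    have hmem : extT T a ∈ cycleSpace G := LinearMap.mem_ker.mpr (LinearMap.mem_ker.mp ha)
    have hsupp : support (extT T a) ⊆ (↑T : Set G.E) := by
      intro g hg
      by_contra hgT
      apply Function.mem_support.mp hg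
      show (if h : g ∈ T then a ⟨g, h⟩ else 0) = 0
      rw [dif_neg (fun hh : g ∈ T => hgT hh)]
    have h0 := no_cyc_in_tree hT hmem hsupp
    funext t
    have := congrFun h0 t.1
    rw [show ((0 : G.E → ℝ) t.1) = 0 from rfl] at this
    rw [show (extT T a) t.1 = (if h : t.1 ∈ T then a ⟨t.1, h⟩ else 0) from rfl, dif_pos t.2] at this
    simpa using this
  have h2 : T.card ≤ Module.finrank ℝ ↥(cocycleSpace G) := by
    have hr : Module.finrank ℝ ↥(LinearMap.range ((DMap G).comp (extT T))) = T.card := by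
      rw [LinearMap.finrank_range_of_inj hφ, hfrT]
    have hle : LinearMap.range ((DMap G).comp (extT T)) ≤ LinearMap.range (DMap G) :=
      LinearMap.range_comp_le_range _ _
    have := Submodule.finrank_mono hle
    rw [hr, ← finrank_cocycleSpace_eq_rank] at this
    exact this
  omega

lemma finrank_spaces_add {G : Graph} :
    Module.finrank ℝ ↥(cycleSpace G) + Module.finrank ℝ ↥(cocycleSpace G) =
      Fintype.card G.E := by
  have h1 := LinearMap.finrank_range_add_finrank_ker (DMap G)
  rw [Module.finrank_pi] at h1
  rw [finrank_cocycleSpace_eq_rank]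
  have h2 : cycleSpace G = LinearMap.ker (DMap G) := rfl
  rw [h2]
  omega

lemma resT_surjective {T : Finset G.E} (hT : IsSpanningTree G T) :
    Function.Surjective (resT T (cocycleSpace G)) := by
  have hfr : Module.finrank ℝ ↥(cocycleSpace G) = Module.finrank ℝ ((↥T) → ℝ) := by
    rw [Module.finrank_pi, Fintype.card_coe, ← card_tree hT]
  exact (LinearMap.injective_iff_surjective_of_finrank_eq_finrank hfr).mp (resT_injective hT)

lemma resTc_surjective {T : Finset G.E} (hT : IsSpanningTree G T) :
    Function.Surjective (resT (Finset.univ \ T) (cycleSpace G)) := by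
  classical
  have hcard : (Finset.univ \ T).card = Fintype.card G.E - T.card := by
    rw [Finset.card_sdiff_of_subset (Finset.subset_univ T), Finset.card_univ]
  have hcle : T.card ≤ Fintype.card G.E := by
    rw [← Finset.card_univ]
    exact Finset.card_le_card (Finset.subset_univ T)
  have hfr : Module.finrank ℝ ↥(cycleSpace G) =
      Module.finrank ℝ ((↥(Finset.univ \ T)) → ℝ) := by
    rw [Module.finrank_pi, Fintype.card_coe, hcard]
    have := finrank_spaces_add (G := G)
    have := card_tree hT
    omega
  exact (LinearMap.injective_iff_surjective_of_finrank_eq_finrank hfr).mp (resTc_injective hT)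

lemma exists_fundCycleVec {T : Finset G.E} (hT : IsSpanningTree G T) {e : G.E} (he : e ∉ T) :
    ∃ z, z ∈ cycleSpace G ∧ z e = 1 ∧ support z ⊆ insert e (↑T : Set G.E) ∧
      FundCycle G T e z := by
  classical
  obtain ⟨x, hx⟩ := resTc_surjective hT (fun g => if (g : G.E) = e then (1:ℝ) else 0)
  have hxval : ∀ g (hg : g ∈ Finset.univ \ T), (x : G.E → ℝ) g = if g = e then 1 else 0 :=
    fun g hg => congrFun hx ⟨g, hg⟩
  have heU : e ∈ Finset.univ \ T := Finset.mem_sdiff.mpr ⟨Finset.mem_univ e, he⟩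
  have hxe : (x : G.E → ℝ) e = 1 := by rw [hxval e heU, if_pos rfl]
  have hxsupp : support (x : G.E → ℝ) ⊆ insert e (↑T : Set G.E) := by
    intro g hg
    by_cases hgT : g ∈ T
    · exact Set.mem_insert_of_mem _ hgT
    · have hgU : g ∈ Finset.univ \ T := Finset.mem_sdiff.mpr ⟨Finset.mem_univ g, hgT⟩
      by_cases hge : g = e
      · rw [hge]; exact Set.mem_insert _ _
      · exact absurd (by rw [hxval g hgU, if_neg hge]) (Function.mem_support.mp hg)
  have hx0 : (x : G.E → ℝ) ≠ 0 := by
    intro h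
    rw [h] at hxe
    simpa using hxe
  obtain ⟨dd, hdd, hds⟩ := exists_dirCycle_subset G x.2 hx0
  have hsub : support dd ⊆ insert e (↑T : Set G.E) := hds.trans hxsupp
  have hde : dd e ≠ 0 := by
    intro h
    apply hT.1 dd hdd
    intro g hg
    rcases Set.mem_insert_iff.mp (hsub hg) with h1 | h1
    · subst h1
      exact absurd h (Function.mem_support.mp hg)
    · exact h1
  rcases hdd.2.2.1 e with h0 | h1 | hm1
  · exact absurd h0 hde
  · exact ⟨dd, hdd.1, h1, hsub, hdd, h1, hsub⟩
  · have hnsub : support (-dd) ⊆ insert e (↑T : Set G.E) := by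
      rw [Function.support_neg]; exact hsub
    have hne1 : (-dd) e = 1 := by rw [Pi.neg_apply, hm1]; norm_num
    exact ⟨-dd, neg_mem hdd.1, hne1, hnsub, IsDirCycle.neg' G hdd, hne1, hnsub⟩

lemma exists_fundCocycVec {T : Finset G.E} (hT : IsSpanningTree G T) {f : G.E} (hf : f ∈ T) :
    ∃ z, z ∈ cocycleSpace G ∧ z f = 1 ∧ support z ⊆ insert f ((↑T : Set G.E)ᶜ) ∧
      FundCocycle G T f z := by
  classical
  obtain ⟨y, hy⟩ := resT_surjective hT (fun t => if (t : G.E) = f then (1:ℝ) else 0)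
  have hyval : ∀ g (hg : g ∈ T), (y : G.E → ℝ) g = if g = f then 1 else 0 :=
    fun g hg => congrFun hy ⟨g, hg⟩
  have hyf : (y : G.E → ℝ) f = 1 := by rw [hyval f hf, if_pos rfl]
  have hysupp : support (y : G.E → ℝ) ⊆ insert f ((↑T : Set G.E)ᶜ) := by
    intro g hg
    by_cases hgT : g ∈ T
    · by_cases hgf : g = f
      · rw [hgf]; exact Set.mem_insert _ _
      · exact absurd (by rw [hyval g hgT, if_neg hgf]) (Function.mem_support.mp hg)
    · exact Set.mem_insert_of_mem _ (by simpa using hgT)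
  have hy0 : (y : G.E → ℝ) ≠ 0 := by
    intro h
    rw [h] at hyf
    simpa using hyf
  obtain ⟨dd, hdd, hds⟩ := exists_dirCocycle_subset G y.2 hy0
  have hsub : support dd ⊆ insert f ((↑T : Set G.E)ᶜ) := hds.trans hysupp
  have hdf : dd f ≠ 0 := by
    intro h
    apply hT.2 dd hdd
    intro g hg
    rcases Set.mem_insert_iff.mp (hsub hg) with h1 | h1
    · subst h1
      exact absurd h (Function.mem_support.mp hg)
    · exact h1
  rcases hdd.2.2.1 f with h0 | h1 | hm1
  · exact absurd h0 hdf
  · exact ⟨dd, hdd.1, h1, hsub, hdd, h1, hsub⟩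
  · have hnsub : support (-dd) ⊆ insert f ((↑T : Set G.E)ᶜ) := by
      rw [Function.support_neg]; exact hsub
    have hne1 : (-dd) f = 1 := by rw [Pi.neg_apply, hm1]; norm_num
    exact ⟨-dd, neg_mem hdd.1, hne1, hnsub, IsDirCocycle.neg' G hdd, hne1, hnsub⟩

lemma cyc_unique {T : Finset G.E} (hT : IsSpanningTree G T) {e : G.E} {z x : G.E → ℝ}
    (hz : z ∈ cycleSpace G) (hze : z e = 1) (hzs : support z ⊆ insert e (↑T : Set G.E))
    (hx : x ∈ cycleSpace G) (hxs : support x ⊆ insert e (↑T : Set G.E)) :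
    x = x e • z := by
  have hy : x - x e • z ∈ cycleSpace G := sub_mem hx (Submodule.smul_mem _ _ hz)
  have hys : support (x - x e • z) ⊆ (↑T : Set G.E) := by
    intro g hg
    by_contra hgT
    apply Function.mem_support.mp hg
    rw [Pi.sub_apply, Pi.smul_apply, smul_eq_mul]
    by_cases hge : g = e
    · rw [hge, hze]; ring
    · have h1 : x g = 0 := by
        by_contra h
        rcases Set.mem_insert_iff.mp (hxs (Function.mem_support.mpr h)) with h2 | h2
        · exact hge h2
        · exact hgT h2
      have h2 : z g = 0 := by
        by_contra h
        rcases Set.mem_insert_iff.mp (hzs (Function.mem_support.mpr h)) with h2 | h2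
        · exact hge h2
        · exact hgT h2
      rw [h1, h2]; ring
  exact sub_eq_zero.mp (no_cyc_in_tree hT hy hys)

lemma cocyc_unique {T : Finset G.E} (hT : IsSpanningTree G T) {f : G.E} (hf : f ∈ T)
    {z y : G.E → ℝ}
    (hz : z ∈ cocycleSpace G) (hzf : z f = 1) (hzs : support z ⊆ insert f ((↑T : Set G.E)ᶜ))
    (hy : y ∈ cocycleSpace G) (hys : support y ⊆ insert f ((↑T : Set G.E)ᶜ)) :
    y = y f • z := by
  have hw : y - y f • z ∈ cocycleSpace G := sub_mem hy (Submodule.smul_mem _ _ hz)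
  have hws : support (y - y f • z) ⊆ ((↑T : Set G.E)ᶜ) := by
    intro g hg
    simp only [Set.mem_compl_iff, Finset.mem_coe]
    intro hgT
    apply Function.mem_support.mp hg
    rw [Pi.sub_apply, Pi.smul_apply, smul_eq_mul]
    by_cases hgf : g = f
    · rw [hgf, hzf]; ring
    · have h1 : y g = 0 := by
        by_contra h
        rcases Set.mem_insert_iff.mp (hys (Function.mem_support.mpr h)) with h2 | h2
        · exact hgf h2
        · exact h2 (by simpa using hgT)
      have h2 : z g = 0 := by
        by_contra h
        rcases Set.mem_insert_iff.mp (hzs (Function.mem_support.mpr h)) with h2 | h2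
        · exact hgf h2
        · exact h2 (by simpa using hgT)
      rw [h1, h2]; ring
  exact sub_eq_zero.mp (no_cocyc_out_tree hT hw hws)

lemma cyc_expansion {T : Finset G.E} (hT : IsSpanningTree G T) (Z : G.E → G.E → ℝ)
    (hZ : ∀ e, e ∉ T → Z e ∈ cycleSpace G ∧ Z e e = 1 ∧
      support (Z e) ⊆ insert e (↑T : Set G.E))
    {x : G.E → ℝ} (hx : x ∈ cycleSpace G) :
    x = ∑ e ∈ Finset.univ \ T, x e • Z e := by
  classical
  have hmem : ∑ e ∈ Finset.univ \ T, x e • Z e ∈ cycleSpace G :=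
    Submodule.sum_mem _ fun e he => Submodule.smul_mem _ _
      (hZ e (Finset.mem_sdiff.mp he).2).1
  have hy : x - ∑ e ∈ Finset.univ \ T, x e • Z e ∈ cycleSpace G := sub_mem hx hmem
  have hys : support (x - ∑ e ∈ Finset.univ \ T, x e • Z e) ⊆ (↑T : Set G.E) := by
    intro g hg
    by_contra hgT
    apply Function.mem_support.mp hg
    have hgU : g ∈ Finset.univ \ T := Finset.mem_sdiff.mpr ⟨Finset.mem_univ g, fun h => hgT h⟩
    have hval : ∀ e ∈ Finset.univ \ T, (x e • Z e) g = if e = g then x g else 0 := by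
      intro e he
      by_cases heg : e = g
      · subst heg
        rw [if_pos rfl, Pi.smul_apply, smul_eq_mul, (hZ e (Finset.mem_sdiff.mp he).2).2.1,
          mul_one]
      · rw [if_neg heg, Pi.smul_apply, smul_eq_mul]
        have hz0 : Z e g = 0 := by
          by_contra h
          rcases Set.mem_insert_iff.mp ((hZ e (Finset.mem_sdiff.mp he).2).2.2
            (Function.mem_support.mpr h)) with h2 | h2
          · exact heg h2.symm
          · exact hgT h2
        rw [hz0, mul_zero]
    rw [Pi.sub_apply, Finset.sum_apply, Finset.sum_congr rfl hval, Finset.sum_ite_eq',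
      if_pos hgU, sub_self]
  exact sub_eq_zero.mp (no_cyc_in_tree hT hy hys)

lemma cocyc_expansion {T : Finset G.E} (hT : IsSpanningTree G T) (W : G.E → G.E → ℝ)
    (hW : ∀ f, f ∈ T → W f ∈ cocycleSpace G ∧ W f f = 1 ∧
      support (W f) ⊆ insert f ((↑T : Set G.E)ᶜ))
    {y : G.E → ℝ} (hy : y ∈ cocycleSpace G) :
    y = ∑ f ∈ T, y f • W f := by
  classical
  have hmem : ∑ f ∈ T, y f • W f ∈ cocycleSpace G :=
    Submodule.sum_mem _ fun f hf => Submodule.smul_mem _ _ (hW f hf).1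
  have hw : y - ∑ f ∈ T, y f • W f ∈ cocycleSpace G := sub_mem hy hmem
  have hws : support (y - ∑ f ∈ T, y f • W f) ⊆ ((↑T : Set G.E)ᶜ) := by
    intro g hg
    simp only [Set.mem_compl_iff, Finset.mem_coe]
    intro hgT
    apply Function.mem_support.mp hg
    have hval : ∀ f ∈ T, (y f • W f) g = if f = g then y g else 0 := by
      intro f hf
      by_cases hfg : f = g
      · subst hfg
        rw [if_pos rfl, Pi.smul_apply, smul_eq_mul, (hW f hf).2.1, mul_one]
      · rw [if_neg hfg, Pi.smul_apply, smul_eq_mul]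
        have hz0 : W f g = 0 := by
          by_contra h
          rcases Set.mem_insert_iff.mp ((hW f hf).2.2 (Function.mem_support.mpr h)) with h2 | h2
          · exact hfg h2.symm
          · exact h2 (by simpa using hgT)
        rw [hz0, mul_zero]
    rw [Pi.sub_apply, Finset.sum_apply, Finset.sum_congr rfl hval, Finset.sum_ite_eq',
      if_pos hgT, sub_self]
  exact sub_eq_zero.mp (no_cocyc_out_tree hT hw hws)

lemma glink_cyc {T : Finset G.E} (hT : IsSpanningTree G T) {σc : CycSig G} {σs : CocycSig G}
    {O : G.E → ℝ} (hO : GOrient G σc σs T O) {e : G.E} (he : e ∉ T) {z : G.E → ℝ}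
    (hz : FundCycle G T e z) :
    IsCycle G (support z) ∧ σc.s (support z) = dir G O e • z := by
  have hcyc : IsCycle G (support z) := ⟨z, hz.1, rfl⟩
  obtain ⟨hσd, hσs⟩ := σc.mem _ hcyc
  have hσmem : σc.s (support z) ∈ cycleSpace G := hσd.1
  have hσsupp : support (σc.s (support z)) ⊆ insert e (↑T : Set G.E) := by
    rw [hσs]; exact hz.2.2
  have hdir : dir G O e = σc.s (support z) e := hO.2.1 e he z hz
  have huniq := cyc_unique hT hz.1.1 hz.2.1 hz.2.2 hσmem hσsupp
  rw [← hdir] at huniq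
  exact ⟨hcyc, huniq⟩

lemma glink_cocyc {T : Finset G.E} (hT : IsSpanningTree G T) {σc : CycSig G} {σs : CocycSig G}
    {O : G.E → ℝ} (hO : GOrient G σc σs T O) {f : G.E} (hf : f ∈ T) {z : G.E → ℝ}
    (hz : FundCocycle G T f z) :
    IsCocycle G (support z) ∧ σs.s (support z) = dir G O f • z := by
  have hcyc : IsCocycle G (support z) := ⟨z, hz.1, rfl⟩
  obtain ⟨hσd, hσs⟩ := σs.mem _ hcyc
  have hσmem : σs.s (support z) ∈ cocycleSpace G := hσd.1
  have hσsupp : support (σs.s (support z)) ⊆ insert f ((↑T : Set G.E)ᶜ) := by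
    rw [hσs]; exact hz.2.2
  have hdir : dir G O f = σs.s (support z) f := hO.2.2 f hf z hz
  have huniq := cocyc_unique hT hf hz.1.1 hz.2.1 hz.2.2 hσmem hσsupp
  rw [← hdir] at huniq
  exact ⟨hcyc, huniq⟩

lemma dir_sq {O : G.E → ℝ} (hO : IsOrientation G O) (e : G.E) :
    dir G O e * dir G O e = 1 := by
  rcases hO e with h | h <;> simp [dir, h] <;> norm_num

lemma gordan_cyc (G : Graph) (σc : CycSig G) (hac : AcyclicSig G σc) :
    ∃ f : (G.E → ℝ) →L[ℝ] ℝ, ∀ C, IsCycle G C → 0 < f (σc.s C) := by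
  classical
  set Φ : Finset (Set G.E) := Finset.univ.filter (fun C => IsCycle G C) with hΦ
  have hmemΦ : ∀ C : Set G.E, C ∈ Φ ↔ IsCycle G C := fun C =>
    ⟨fun h => (Finset.mem_filter.mp h).2, fun h => Finset.mem_filter.mpr ⟨Finset.mem_univ C, h⟩⟩
  set L : ({C // C ∈ Φ} → ℝ) →ₗ[ℝ] (G.E → ℝ) :=
    ∑ i : {C // C ∈ Φ}, LinearMap.smulRight (LinearMap.proj i) (σc.s i.1) with hL
  have hLa : ∀ a, L a = ∑ i : {C // C ∈ Φ}, a i • σc.s i.1 := by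
    intro a
    rw [hL, LinearMap.sum_apply]
    exact Finset.sum_congr rfl fun i _ => rfl
  have h0S : (0 : G.E → ℝ) ∉ L '' stdSimplex ℝ {C // C ∈ Φ} := by
    rintro ⟨a, ⟨ha0, ha1⟩, haL⟩
    have key : ∀ C, IsCycle G C →
        (fun C => if h : C ∈ Φ then a ⟨C, h⟩ else 0) C = 0 := by
      apply hac
      · intro C
        by_cases h : C ∈ Φ
        · rw [dif_pos h]; exact ha0 _
        · rw [dif_neg h]
      · have hstep : ∀ (s : Finset (Set G.E)), (∀ C, C ∈ s ↔ IsCycle G C) →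
            (∑ C ∈ s, (if h : C ∈ Φ then a ⟨C, h⟩ else 0) • σc.s C) = 0 := by
          intro s hs
          have hseq : s = Φ := Finset.ext fun C => (hs C).trans (hmemΦ C).symm
          rw [hseq]
          rw [← Finset.sum_attach Φ (fun C => (if h : C ∈ Φ then a ⟨C, h⟩ else 0) • σc.s C)]
          have : ∀ i : {C // C ∈ Φ}, (if h : i.1 ∈ Φ then a ⟨i.1, h⟩ else 0) • σc.s i.1
              = a i • σc.s i.1 := by
            intro i
            rw [dif_pos i.2]
          rw [Finset.sum_congr rfl (fun i _ => this i)]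
          rw [← Finset.univ_eq_attach, ← hLa, haL]
        exact hstep _ (fun C => by
          constructor
          · intro h; exact (Finset.mem_filter.mp h).2
          · intro h; exact Finset.mem_filter.mpr ⟨Finset.mem_univ C, h⟩)
    have hzero : ∀ i : {C // C ∈ Φ}, a i = 0 := by
      intro i
      have h2 := key i.1 ((hmemΦ i.1).mp i.2)
      simpa [dif_pos i.2] using h2
    rw [Finset.sum_eq_zero (fun i _ => hzero i)] at ha1
    exact one_ne_zero ha1.symm
  have hconv : Convex ℝ (L '' stdSimplex ℝ {C // C ∈ Φ}) :=
    (convex_stdSimplex ℝ _).linear_image L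
  have hcomp : IsCompact (L '' stdSimplex ℝ {C // C ∈ Φ}) :=
    (isCompact_stdSimplex ℝ _).image L.continuous_of_finiteDimensional
  obtain ⟨f, u, hf0, hfS⟩ := geometric_hahn_banach_point_closed hconv hcomp.isClosed h0S
  refine ⟨f, fun C hC' => ?_⟩
  have hCmem : C ∈ Φ := (hmemΦ C).mpr hC'
  have hmem : σc.s C ∈ L '' stdSimplex ℝ {C // C ∈ Φ} := by
    refine ⟨Pi.single ⟨C, hCmem⟩ 1, ⟨?_, ?_⟩, ?_⟩
    · intro i
      rcases eq_or_ne i ⟨C, hCmem⟩ with h | h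
      · rw [h, Pi.single_eq_same]; norm_num
      · rw [Pi.single_eq_of_ne h]
    · rw [Finset.sum_pi_single']
      simp
    · rw [hLa, Finset.sum_eq_single (⟨C, hCmem⟩ : {C // C ∈ Φ})]
      · rw [Pi.single_eq_same, one_smul]
      · intro b _ hb
        rw [Pi.single_eq_of_ne hb, zero_smul]
      · intro h
        exact absurd (Finset.mem_univ _) h
  have hfin := hfS _ hmem
  have hf00 : f (0 : G.E → ℝ) = 0 := map_zero f
  rw [hf00] at hf0
  linarith

lemma gordan_cocyc (G : Graph) (σs : CocycSig G) (hac : AcyclicCosig G σs) :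
    ∃ f : (G.E → ℝ) →L[ℝ] ℝ, ∀ C, IsCocycle G C → 0 < f (σs.s C) := by
  classical
  set Φ : Finset (Set G.E) := Finset.univ.filter (fun C => IsCocycle G C) with hΦ
  have hmemΦ : ∀ C : Set G.E, C ∈ Φ ↔ IsCocycle G C := fun C =>
    ⟨fun h => (Finset.mem_filter.mp h).2, fun h => Finset.mem_filter.mpr ⟨Finset.mem_univ C, h⟩⟩
  set L : ({C // C ∈ Φ} → ℝ) →ₗ[ℝ] (G.E → ℝ) :=
    ∑ i : {C // C ∈ Φ}, LinearMap.smulRight (LinearMap.proj i) (σs.s i.1) with hL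
  have hLa : ∀ a, L a = ∑ i : {C // C ∈ Φ}, a i • σs.s i.1 := by
    intro a
    rw [hL, LinearMap.sum_apply]
    exact Finset.sum_congr rfl fun i _ => rfl
  have h0S : (0 : G.E → ℝ) ∉ L '' stdSimplex ℝ {C // C ∈ Φ} := by
    rintro ⟨a, ⟨ha0, ha1⟩, haL⟩
    have key : ∀ C, IsCocycle G C →
        (fun C => if h : C ∈ Φ then a ⟨C, h⟩ else 0) C = 0 := by
      apply hac
      · intro C
        by_cases h : C ∈ Φ
        · rw [dif_pos h]; exact ha0 _
        · rw [dif_neg h]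
      · have hstep : ∀ (s : Finset (Set G.E)), (∀ C, C ∈ s ↔ IsCocycle G C) →
            (∑ C ∈ s, (if h : C ∈ Φ then a ⟨C, h⟩ else 0) • σs.s C) = 0 := by
          intro s hs
          have hseq : s = Φ := Finset.ext fun C => (hs C).trans (hmemΦ C).symm
          rw [hseq]
          rw [← Finset.sum_attach Φ (fun C => (if h : C ∈ Φ then a ⟨C, h⟩ else 0) • σs.s C)]
          have : ∀ i : {C // C ∈ Φ}, (if h : i.1 ∈ Φ then a ⟨i.1, h⟩ else 0) • σs.s i.1
              = a i • σs.s i.1 := by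
            intro i
            rw [dif_pos i.2]
          rw [Finset.sum_congr rfl (fun i _ => this i)]
          rw [← Finset.univ_eq_attach, ← hLa, haL]
        exact hstep _ (fun C => by
          constructor
          · intro h; exact (Finset.mem_filter.mp h).2
          · intro h; exact Finset.mem_filter.mpr ⟨Finset.mem_univ C, h⟩)
    have hzero : ∀ i : {C // C ∈ Φ}, a i = 0 := by
      intro i
      have h2 := key i.1 ((hmemΦ i.1).mp i.2)
      simpa [dif_pos i.2] using h2
    rw [Finset.sum_eq_zero (fun i _ => hzero i)] at ha1
    exact one_ne_zero ha1.symm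
  have hconv : Convex ℝ (L '' stdSimplex ℝ {C // C ∈ Φ}) :=
    (convex_stdSimplex ℝ _).linear_image L
  have hcomp : IsCompact (L '' stdSimplex ℝ {C // C ∈ Φ}) :=
    (isCompact_stdSimplex ℝ _).image L.continuous_of_finiteDimensional
  obtain ⟨f, u, hf0, hfS⟩ := geometric_hahn_banach_point_closed hconv hcomp.isClosed h0S
  refine ⟨f, fun C hC' => ?_⟩
  have hCmem : C ∈ Φ := (hmemΦ C).mpr hC'
  have hmem : σs.s C ∈ L '' stdSimplex ℝ {C // C ∈ Φ} := by
    refine ⟨Pi.single ⟨C, hCmem⟩ 1, ⟨?_, ?_⟩, ?_⟩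
    · intro i
      rcases eq_or_ne i ⟨C, hCmem⟩ with h | h
      · rw [h, Pi.single_eq_same]; norm_num
      · rw [Pi.single_eq_of_ne h]
    · rw [Finset.sum_pi_single']
      simp
    · rw [hLa, Finset.sum_eq_single (⟨C, hCmem⟩ : {C // C ∈ Φ})]
      · rw [Pi.single_eq_same, one_smul]
      · intro b _ hb
        rw [Pi.single_eq_of_ne hb, zero_smul]
      · intro h
        exact absurd (Finset.mem_univ _) h
  have hfin := hfS _ hmem
  have hf00 : f (0 : G.E → ℝ) = 0 := map_zero f
  rw [hf00] at hf0
  linarith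

end AuxStmt9

end GB

open GB in
theorem stmt_9 (G : GB.Graph) (hconn : GB.Connected G)
    (σc : GB.CycSig G) (σs : GB.CocycSig G)
    (hac : GB.AcyclicSig G σc) (hacs : GB.AcyclicCosig G σs)
    (T₁ T₂ : Finset G.E) (hT₁ : GB.IsSpanningTree G T₁) (hT₂ : GB.IsSpanningTree G T₂)
    (hne : T₁ ≠ T₂)
    (O₁ O₂ : G.E → ℝ) (hO₁ : GB.GOrient G σc σs T₁ O₁) (hO₂ : GB.GOrient G σc σs T₂ O₂) :
    ∃ e : G.E, ((e ∈ T₁ ∧ e ∉ T₂) ∨ (e ∈ T₂ ∧ e ∉ T₁)) ∧ O₁ e ≠ O₂ e := by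
  classical
  by_contra hcon
  push_neg at hcon
  obtain ⟨fw, hfw⟩ := gordan_cyc G σc hac
  obtain ⟨fs, hfs⟩ := gordan_cocyc G σs hacs
  have hZ1ex : ∀ e : G.E, ∃ z : G.E → ℝ, e ∉ T₁ → (z ∈ cycleSpace G ∧ z e = 1 ∧
      Function.support z ⊆ insert e (↑T₁ : Set G.E) ∧ FundCycle G T₁ e z) := by
    intro e
    by_cases h : e ∉ T₁
    · obtain ⟨z, hz⟩ := exists_fundCycleVec hT₁ h
      exact ⟨z, fun _ => hz⟩
    · exact ⟨0, fun h' => absurd h' h⟩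
  choose Z₁ hZ₁ using hZ1ex
  have hZ2ex : ∀ e : G.E, ∃ z : G.E → ℝ, e ∉ T₂ → (z ∈ cycleSpace G ∧ z e = 1 ∧
      Function.support z ⊆ insert e (↑T₂ : Set G.E) ∧ FundCycle G T₂ e z) := by
    intro e
    by_cases h : e ∉ T₂
    · obtain ⟨z, hz⟩ := exists_fundCycleVec hT₂ h
      exact ⟨z, fun _ => hz⟩
    · exact ⟨0, fun h' => absurd h' h⟩
  choose Z₂ hZ₂ using hZ2ex
  have hW1ex : ∀ f : G.E, ∃ z : G.E → ℝ, f ∈ T₁ → (z ∈ cocycleSpace G ∧ z f = 1 ∧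
      Function.support z ⊆ insert f ((↑T₁ : Set G.E)ᶜ) ∧ FundCocycle G T₁ f z) := by
    intro f
    by_cases h : f ∈ T₁
    · obtain ⟨z, hz⟩ := exists_fundCocycVec hT₁ h
      exact ⟨z, fun _ => hz⟩
    · exact ⟨0, fun h' => absurd h' h⟩
  choose W₁ hW₁ using hW1ex
  have hW2ex : ∀ f : G.E, ∃ z : G.E → ℝ, f ∈ T₂ → (z ∈ cocycleSpace G ∧ z f = 1 ∧
      Function.support z ⊆ insert f ((↑T₂ : Set G.E)ᶜ) ∧ FundCocycle G T₂ f z) := by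
    intro f
    by_cases h : f ∈ T₂
    · obtain ⟨z, hz⟩ := exists_fundCocycVec hT₂ h
      exact ⟨z, fun _ => hz⟩
    · exact ⟨0, fun h' => absurd h' h⟩
  choose W₂ hW₂ using hW2ex
  -- positivity on the symmetric difference
  have hposU : ∀ e ∈ T₂ \ T₁, 0 < fw (Z₁ e) * fs (W₂ e) := by
    intro e heU
    obtain ⟨he2, he1⟩ := Finset.mem_sdiff.mp heU
    obtain ⟨hcyc, hσ⟩ := glink_cyc hT₁ hO₁ he1 (hZ₁ e he1).2.2.2
    obtain ⟨hcoc, hτ⟩ := glink_cocyc hT₂ hO₂ he2 (hW₂ e he2).2.2.2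
    have hA := hfw _ hcyc
    rw [hσ, map_smul, smul_eq_mul] at hA
    have hB := hfs _ hcoc
    rw [hτ, map_smul, smul_eq_mul] at hB
    have heq : O₁ e = O₂ e := hcon e (Or.inr ⟨he2, he1⟩)
    have hdeq : dir G O₁ e = dir G O₂ e := by simp only [dir, heq]
    rw [← hdeq] at hB
    have h3 := mul_pos hA hB
    have h4 : (dir G O₁ e * fw (Z₁ e)) * (dir G O₁ e * fs (W₂ e)) =
        (dir G O₁ e * dir G O₁ e) * (fw (Z₁ e) * fs (W₂ e)) := by ring
    rw [h4, dir_sq hO₁.1 e, one_mul] at h3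
    exact h3
  have hposF : ∀ f ∈ T₁ \ T₂, 0 < fw (Z₂ f) * fs (W₁ f) := by
    intro f hfF
    obtain ⟨hf1, hf2⟩ := Finset.mem_sdiff.mp hfF
    obtain ⟨hcyc, hσ⟩ := glink_cyc hT₂ hO₂ hf2 (hZ₂ f hf2).2.2.2
    obtain ⟨hcoc, hτ⟩ := glink_cocyc hT₁ hO₁ hf1 (hW₁ f hf1).2.2.2
    have hA := hfw _ hcyc
    rw [hσ, map_smul, smul_eq_mul] at hA
    have hB := hfs _ hcoc
    rw [hτ, map_smul, smul_eq_mul] at hB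
    have heq : O₁ f = O₂ f := hcon f (Or.inl ⟨hf1, hf2⟩)
    have hdeq : dir G O₁ f = dir G O₂ f := by simp only [dir, heq]
    rw [hdeq] at hB
    have h3 := mul_pos hA hB
    have h4 : (dir G O₂ f * fw (Z₂ f)) * (dir G O₂ f * fs (W₁ f)) =
        (dir G O₂ f * dir G O₂ f) * (fw (Z₂ f) * fs (W₁ f)) := by ring
    rw [h4, dir_sq hO₂.1 f, one_mul] at h3
    exact h3
  -- expansions
  have hexp_p : ∀ e ∈ T₂ \ T₁, fs (W₂ e) = ∑ f ∈ T₁ \ T₂, W₂ e f * fs (W₁ f) := by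
    intro e heU
    obtain ⟨he2, he1⟩ := Finset.mem_sdiff.mp heU
    have hexp := cocyc_expansion hT₁ W₁ (fun f hf => ⟨(hW₁ f hf).1, (hW₁ f hf).2.1,
      (hW₁ f hf).2.2.1⟩) (hW₂ e he2).1
    have hstep : fs (W₂ e) = ∑ f ∈ T₁, W₂ e f * fs (W₁ f) := by
      conv_lhs => rw [hexp]
      rw [map_sum]
      exact Finset.sum_congr rfl fun f _ => by rw [map_smul, smul_eq_mul]
    rw [hstep]
    symm
    refine Finset.sum_subset Finset.sdiff_subset ?_
    intro f hf1 hfF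
    have hf2 : f ∈ T₂ := by
      by_contra h
      exact hfF (Finset.mem_sdiff.mpr ⟨hf1, h⟩)
    have hfe : f ≠ e := fun h => he1 (h ▸ hf1)
    have hw0 : W₂ e f = 0 := by
      by_contra h
      rcases Set.mem_insert_iff.mp ((hW₂ e he2).2.2.1 (Function.mem_support.mpr h)) with h2 | h2
      · exact hfe h2
      · exact h2 (Finset.mem_coe.mpr hf2)
    rw [hw0, zero_mul]
  have hexp_b : ∀ f ∈ T₁ \ T₂, fw (Z₂ f) = ∑ e ∈ T₂ \ T₁, Z₂ f e * fw (Z₁ e) := by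
    intro f hfF
    obtain ⟨hf1, hf2⟩ := Finset.mem_sdiff.mp hfF
    have hexp := cyc_expansion hT₁ Z₁ (fun g hg => ⟨(hZ₁ g hg).1, (hZ₁ g hg).2.1,
      (hZ₁ g hg).2.2.1⟩) (hZ₂ f hf2).1
    have hstep : fw (Z₂ f) = ∑ g ∈ Finset.univ \ T₁, Z₂ f g * fw (Z₁ g) := by
      conv_lhs => rw [hexp]
      rw [map_sum]
      exact Finset.sum_congr rfl fun g _ => by rw [map_smul, smul_eq_mul]
    rw [hstep]
    symm
    refine Finset.sum_subset ?_ ?_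
    · intro e heU
      obtain ⟨he2, he1⟩ := Finset.mem_sdiff.mp heU
      exact Finset.mem_sdiff.mpr ⟨Finset.mem_univ e, he1⟩
    · intro g hg1 hgU
      have hg1' : g ∉ T₁ := (Finset.mem_sdiff.mp hg1).2
      have hg2 : g ∉ T₂ := by
        intro h
        exact hgU (Finset.mem_sdiff.mpr ⟨h, hg1'⟩)
      have hgf : g ≠ f := fun h => hg1' (h ▸ hf1)
      have hz0 : Z₂ f g = 0 := by
        by_contra h
        rcases Set.mem_insert_iff.mp ((hZ₂ f hf2).2.2.1 (Function.mem_support.mpr h)) with h2 | h2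
        · exact hgf h2
        · exact hg2 h2
      rw [hz0, zero_mul]
  -- duality between mixed fundamental pairings (orthogonality in T₂)
  have hdual : ∀ e ∈ T₂ \ T₁, ∀ f ∈ T₁ \ T₂, Z₂ f e = - W₂ e f := by
    intro e heU f hfF
    obtain ⟨he2, he1⟩ := Finset.mem_sdiff.mp heU
    obtain ⟨hf1, hf2⟩ := Finset.mem_sdiff.mp hfF
    have horth : (∑ g, Z₂ f g * W₂ e g) = 0 :=
      dotE_cyc_cocyc G (hZ₂ f hf2).1 (hW₂ e he2).1
    have hef : e ≠ f := fun h => he1 (h ▸ hf1)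
    have hpair : (∑ g ∈ ({e, f} : Finset G.E), Z₂ f g * W₂ e g) = ∑ g, Z₂ f g * W₂ e g := by
      refine Finset.sum_subset (Finset.subset_univ _) ?_
      intro g _ hg
      simp only [Finset.mem_insert, Finset.mem_singleton] at hg
      push_neg at hg
      by_cases hz : Z₂ f g = 0
      · rw [hz, zero_mul]
      · have h1 := (hZ₂ f hf2).2.2.1 (Function.mem_support.mpr hz)
        rcases Set.mem_insert_iff.mp h1 with h2 | h2
        · exact absurd h2 hg.2
        · have hw0 : W₂ e g = 0 := by
            by_contra hw
            rcases Set.mem_insert_iff.mp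
              ((hW₂ e he2).2.2.1 (Function.mem_support.mpr hw)) with h3 | h3
            · exact hg.1 h3
            · exact h3 h2
          rw [hw0, mul_zero]
    rw [← hpair, Finset.sum_pair hef, (hW₂ e he2).2.1, (hZ₂ f hf2).2.1, mul_one, one_mul]
      at horth
    linarith
  -- the orthogonality identity
  have hid : (∑ e ∈ T₂ \ T₁, fw (Z₁ e) * fs (W₂ e)) +
      (∑ f ∈ T₁ \ T₂, fw (Z₂ f) * fs (W₁ f)) = 0 := by
    have h1 : ∑ e ∈ T₂ \ T₁, fw (Z₁ e) * fs (W₂ e)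
        = ∑ e ∈ T₂ \ T₁, ∑ f ∈ T₁ \ T₂, fw (Z₁ e) * (W₂ e f * fs (W₁ f)) := by
      refine Finset.sum_congr rfl fun e he => ?_
      rw [hexp_p e he, Finset.mul_sum]
    have h2 : ∑ f ∈ T₁ \ T₂, fw (Z₂ f) * fs (W₁ f)
        = ∑ e ∈ T₂ \ T₁, ∑ f ∈ T₁ \ T₂, (Z₂ f e * fw (Z₁ e)) * fs (W₁ f) := by
      rw [Finset.sum_comm]
      refine Finset.sum_congr rfl fun f hf => ?_
      rw [hexp_b f hf, Finset.sum_mul]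
    rw [h1, h2, ← Finset.sum_add_distrib]
    refine Finset.sum_eq_zero fun e he => ?_
    rw [← Finset.sum_add_distrib]
    refine Finset.sum_eq_zero fun f hf => ?_
    rw [hdual e he f hf]
    ring
  -- nonemptiness of the symmetric difference
  have hUF : (T₂ \ T₁).Nonempty ∨ (T₁ \ T₂).Nonempty := by
    by_contra h
    push_neg at h
    obtain ⟨h1, h2⟩ := h
    rw [Finset.sdiff_eq_empty_iff_subset] at h1 h2
    exact hne (Finset.Subset.antisymm h2 h1)
  rcases hUF with h | h
  · have hS1 : 0 < ∑ e ∈ T₂ \ T₁, fw (Z₁ e) * fs (W₂ e) := Finset.sum_pos hposU h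
    have hS2 : 0 ≤ ∑ f ∈ T₁ \ T₂, fw (Z₂ f) * fs (W₁ f) :=
      Finset.sum_nonneg fun f hf => (hposF f hf).le
    linarith
  · have hS1 : 0 < ∑ f ∈ T₁ \ T₂, fw (Z₂ f) * fs (W₁ f) := Finset.sum_pos hposF h
    have hS2 : 0 ≤ ∑ e ∈ T₂ \ T₁, fw (Z₁ e) * fs (W₂ e) :=
      Finset.sum_nonneg fun e he => (hposU e he).le
    linarith
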